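/- Let Λ_P be a Penrose model set. Then a direction u ∈ S¹ is a Λ_P-direction (i.e., parallel to a nonzero element of the difference set Λ_P − Λ_P = {λ − λ' : λ, λ' ∈ Λ_P}) if and only if u is a ℤ[ζ₅]-direction (i.e., parallel to a nonzero element of ℤ[ζ₅]). -/

import Mathlib

open scoped Pointwise

noncomputable section

instance : TopologicalSpace (ZMod 5) := ⊥
instance : DiscreteTopology (ZMod 5) := ⟨rfl⟩

/-- The primitive 5th root of unity ζ₅ = exp(2πi/5). -/
def zeta5 : ℂ := Complex.exp (2 * Real.pi * Complex.I / 5)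




lemma hzeta : IsPrimitiveRoot zeta5 5 := by
  have := Complex.isPrimitiveRoot_exp 5 (by norm_num)
  have e : ((5:ℕ):ℂ) = (5:ℂ) := by norm_num
  rw [e] at this
  exact this

lemma z5 : zeta5 ^ 5 = 1 := hzeta.pow_eq_one

lemma zsum : 1 + zeta5 + zeta5 ^ 2 + zeta5 ^ 3 + zeta5 ^ 4 = 0 := by
  have h1 : zeta5 ≠ 1 := hzeta.ne_one (by norm_num)
  have : (zeta5 - 1) * (1 + zeta5 + zeta5 ^ 2 + zeta5 ^ 3 + zeta5 ^ 4) = 0 := by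
    linear_combination z5
  rcases mul_eq_zero.1 this with h | h
  · exact absurd (sub_eq_zero.1 h) h1
  · exact h

-- minpoly degree
lemma minpoly_deg : (minpoly ℚ zeta5).degree = 4 := by
  have h := Polynomial.cyclotomic_eq_minpoly_rat hzeta (by norm_num)
  rw [← h]
  rw [Polynomial.degree_cyclotomic]
  norm_num [Nat.totient_prime (by norm_num : Nat.Prime 5)]

/-- The ring of cyclotomic integers ℤ[ζ₅], as the set of ℤ-combinations of 1, ζ₅, ζ₅², ζ₅³. -/
def Zzeta5 : Set ℂ := {z | ∃ a : Fin 4 → ℤ, z = ∑ j : Fin 4, (a j : ℂ) * zeta5 ^ (j : ℕ)}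

/-- The (unique) integer coefficients of an element of ℤ[ζ₅] w.r.t. the basis 1, ζ₅, ζ₅², ζ₅³. -/
def coeffs (z : ℂ) : Fin 4 → ℤ :=
  open Classical in
  if h : z ∈ Zzeta5 then h.choose else 0

def lincomb (a : Fin 4 → ℤ) : ℂ := ∑ j : Fin 4, (a j : ℂ) * zeta5 ^ (j : ℕ)

lemma mem_Zzeta5_iff {z : ℂ} : z ∈ Zzeta5 ↔ ∃ a, z = lincomb a := Iff.rfl

lemma lincomb_mem (a : Fin 4 → ℤ) : lincomb a ∈ Zzeta5 := ⟨a, rfl⟩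

lemma lincomb_eq_zero {a : Fin 4 → ℤ} (h : lincomb a = 0) : a = 0 := by
  classical
  set p : Polynomial ℚ := ∑ j : Fin 4, Polynomial.C ((a j : ℚ)) * Polynomial.X ^ (j : ℕ) with hp
  have haeval : Polynomial.aeval zeta5 p = 0 := by
    rw [hp]
    simp only [map_sum, map_mul, Polynomial.aeval_C, Polynomial.aeval_X_pow]
    rw [← h]
    simp [lincomb]
  have hcoeff : ∀ j : Fin 4, p.coeff (j : ℕ) = (a j : ℚ) := by
    intro j
    rw [hp, Polynomial.finset_sum_coeff]
    rw [Finset.sum_eq_single j]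
    · simp
    · intro k _ hk
      rw [Polynomial.coeff_C_mul, Polynomial.coeff_X_pow, if_neg (by
        simp only [ne_eq, Fin.val_eq_val] at *
        exact fun hc => hk (by omega))]
      ring
    · simp
  have hpz : p = 0 := by
    by_contra hne
    have hd := minpoly.degree_le_of_ne_zero ℚ zeta5 hne haeval
    rw [minpoly_deg] at hd
    have : p.degree ≤ 3 := by
      rw [hp]
      refine (Polynomial.degree_sum_le _ _).trans ?_
      refine Finset.sup_le fun j _ => ?_
      refine (Polynomial.degree_C_mul_X_pow_le _ _).trans ?_
      exact_mod_cast Nat.cast_le.2 (by omega : (j:ℕ) ≤ 3)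
    exact absurd (hd.trans this) (by norm_num)
  funext j
  have := hcoeff j
  rw [hpz] at this
  simpa using this.symm

/-- The star map z ↦ (σ₂(z), Σ aⱼ(z) mod 5), with σ₂ the Galois automorphism ζ₅ ↦ ζ₅². -/
def starMap (z : ℂ) : ℂ × ZMod 5 :=
  (∑ j : Fin 4, (coeffs z j : ℂ) * zeta5 ^ (2 * (j : ℕ)),
   ∑ j : Fin 4, ((coeffs z j : ℤ) : ZMod 5))

lemma lincomb_injective : Function.Injective lincomb := by
  intro a b h
  have : lincomb (a - b) = 0 := by
    simp only [lincomb, Pi.sub_apply] at *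
    push_cast
    rw [Fin.sum_univ_four] at *
    rw [Fin.sum_univ_four] at h
    push_cast at h ⊢
    ring_nf
    ring_nf at h
    linear_combination h
  have := lincomb_eq_zero this
  funext j
  have := congrFun this j
  simpa [sub_eq_zero] using this

lemma coeffs_spec {z : ℂ} (h : z ∈ Zzeta5) : z = lincomb (coeffs z) := by
  rw [coeffs, dif_pos h]
  exact h.choose_spec

lemma coeffs_lincomb (a : Fin 4 → ℤ) : coeffs (lincomb a) = a :=
  (lincomb_injective (coeffs_spec (lincomb_mem a)).symm)

def s1 (a : Fin 4 → ℤ) : ℂ := ∑ j : Fin 4, (a j : ℂ) * zeta5 ^ (2 * (j : ℕ))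


lemma starMap_lincomb (a : Fin 4 → ℤ) :
    starMap (lincomb a) = (s1 a, ∑ j : Fin 4, ((a j : ℤ) : ZMod 5)) := by
  rw [starMap, coeffs_lincomb]; rfl

lemma lincomb_add (a b : Fin 4 → ℤ) : lincomb (a + b) = lincomb a + lincomb b := by
  simp only [lincomb, Pi.add_apply]
  rw [← Finset.sum_add_distrib]
  congr 1; funext j; push_cast; ring

lemma lincomb_sub (a b : Fin 4 → ℤ) : lincomb (a - b) = lincomb a - lincomb b := by
  simp only [lincomb, Pi.sub_apply]
  rw [← Finset.sum_sub_distrib]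
  congr 1; funext j; push_cast; ring

lemma Zzeta5_sub {x y : ℂ} (hx : x ∈ Zzeta5) (hy : y ∈ Zzeta5) : x - y ∈ Zzeta5 := by
  obtain ⟨a, rfl⟩ := hx
  obtain ⟨b, rfl⟩ := hy
  exact ⟨a - b, (lincomb_sub a b).symm⟩

lemma s1_add (a b : Fin 4 → ℤ) : s1 (a + b) = s1 a + s1 b := by
  simp only [s1, Pi.add_apply]
  rw [← Finset.sum_add_distrib]
  congr 1; funext j; push_cast; ring

/-- The regular pentagon P: the convex hull of the 5th roots of unity. -/
def pent : Set ℂ := convexHull ℝ {z : ℂ | z ^ 5 = 1}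

/-- The golden ratio τ = (1+√5)/2. -/
def tauR : ℝ := (1 + Real.sqrt 5) / 2


lemma sqrt5_sq : Real.sqrt 5 ^ 2 = 5 := Real.sq_sqrt (by norm_num)

lemma sqrt5_gt : (2:ℝ) < Real.sqrt 5 := by
  nlinarith [sqrt5_sq, Real.sqrt_nonneg 5]

lemma tauR_gt_one : (1:ℝ) < tauR := by unfold tauR; nlinarith [sqrt5_gt]

lemma tauR_sq : tauR ^ 2 = tauR + 1 := by
  unfold tauR; nlinarith [sqrt5_sq]

lemma irrational_sqrt5 : Irrational (Real.sqrt 5) := by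
  have : Nat.Prime 5 := by norm_num
  simpa using this.irrational_sqrt

lemma irrational_tauR : Irrational tauR := by
  rintro ⟨q, hq⟩
  exact irrational_sqrt5 ⟨2 * q - 1, by push_cast; rw [hq]; unfold tauR; ring⟩

/-- θ = 1 - τ -/
lemma irrational_theta : Irrational (1 - tauR) := by
  rintro ⟨q, hq⟩
  exact irrational_tauR ⟨1 - q, by push_cast; rw [hq]; ring⟩

-- zeta5 trig values
lemma zeta5_pow_eq (k : ℕ) : zeta5 ^ k = Complex.exp ((2 * Real.pi * k / 5 : ℝ) * Complex.I) := by
  rw [zeta5, ← Complex.exp_nat_mul]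
  congr 1
  push_cast
  ring

lemma zeta2_eq : zeta5 ^ 2 = Complex.exp (((4 * Real.pi / 5 : ℝ)) * Complex.I) := by
  rw [zeta5_pow_eq 2]; norm_num; ring_nf

lemma zeta3_eq : zeta5 ^ 3 = Complex.exp (((6 * Real.pi / 5 : ℝ)) * Complex.I) := by
  rw [zeta5_pow_eq 3]; norm_num; ring_nf

lemma zeta2_im : (zeta5 ^ 2).im = Real.sin (4 * Real.pi / 5) := by
  rw [zeta2_eq, Complex.exp_ofReal_mul_I_im]

lemma zeta2_im_pos : 0 < (zeta5 ^ 2).im := by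
  rw [zeta2_im]
  apply Real.sin_pos_of_pos_of_lt_pi
  · positivity
  · nlinarith [Real.pi_pos]

lemma zeta2_re : (zeta5 ^ 2).re = Real.cos (4 * Real.pi / 5) := by
  rw [zeta2_eq, Complex.exp_ofReal_mul_I_re]

lemma abs_zeta5 : ‖zeta5‖ = 1 := by
  rw [zeta5]
  have : 2 * (Real.pi:ℂ) * Complex.I / 5 = ((2 * Real.pi / 5 : ℝ) : ℂ) * Complex.I := by
    push_cast; ring
  rw [this, Complex.norm_exp_ofReal_mul_I]

-- t = ζ² + ζ³ is real, equal to -τ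
lemma zeta23_re : zeta5 ^ 2 + zeta5 ^ 3 = ((- tauR : ℝ) : ℂ) := by
  set t : ℂ := zeta5 ^ 2 + zeta5 ^ 3 with ht
  have him : t.im = 0 := by
    rw [ht, Complex.add_im, zeta2_im, zeta3_eq, Complex.exp_ofReal_mul_I_im]
    have e3 : (6 * Real.pi / 5) = Real.pi + Real.pi / 5 := by ring
    have e2 : (4 * Real.pi / 5) = Real.pi - Real.pi / 5 := by ring
    rw [e2, e3]
    simp [Real.sin_add, Real.sin_sub]
  have hre_neg : t.re < 0 := by
    rw [ht, Complex.add_re, zeta2_re, zeta3_eq, Complex.exp_ofReal_mul_I_re]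
    have e3 : (6 * Real.pi / 5) = Real.pi + Real.pi / 5 := by ring
    have e2 : (4 * Real.pi / 5) = Real.pi - Real.pi / 5 := by ring
    rw [e2, e3]
    simp [Real.cos_add, Real.cos_sub]
    nlinarith [Real.sqrt_nonneg 5]
  have hquad : t ^ 2 + t - 1 = 0 := by
    rw [ht]
    linear_combination (zeta5 + 2) * z5 + zsum
  -- t is real
  have htre : t = ((t.re : ℝ) : ℂ) := by
    apply Complex.ext <;> simp [him]
  set x : ℝ := t.re with hx
  have hquadR : x ^ 2 + x - 1 = 0 := by
    have := hquad
    rw [htre] at this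
    have h2 : ((x ^ 2 + x - 1 : ℝ) : ℂ) = 0 := by push_cast; linear_combination this
    exact_mod_cast h2
  have hfac : (x + tauR) * (x - (tauR - 1)) = 0 := by nlinarith [tauR_sq]
  rcases mul_eq_zero.1 hfac with h | h
  · rw [htre]
    exact_mod_cast (by linarith : x = -tauR)
  · exfalso
    have : x = tauR - 1 := by linarith
    rw [this] at hre_neg
    linarith [tauR_gt_one]

-- density of ℤ + ℤθ for irrational θ
lemma dense_int_combo {θ : ℝ} (hθ : Irrational θ) (x ρ : ℝ) (hρ : 0 < ρ) :
    ∃ a b : ℤ, |(a : ℝ) + b * θ - x| < ρ := by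
  classical
  set S : AddSubgroup ℝ := AddSubgroup.closure {1, θ} with hS
  have hmem : ∀ y ∈ S, ∃ a b : ℤ, y = a + b * θ := by
    intro y hy
    induction hy using AddSubgroup.closure_induction with
    | mem z hz =>
      rcases hz with rfl | rfl
      · exact ⟨1, 0, by norm_num⟩
      · exact ⟨0, 1, by norm_num⟩
    | zero => exact ⟨0, 0, by norm_num⟩
    | add y z _ _ hy hz =>
      obtain ⟨a, b, rfl⟩ := hy
      obtain ⟨c, d, rfl⟩ := hz
      exact ⟨a + c, b + d, by push_cast; ring⟩
    | neg y _ hy =>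
      obtain ⟨a, b, rfl⟩ := hy
      exact ⟨-a, -b, by push_cast; ring⟩
  have hdense : Dense (S : Set ℝ) := by
    rcases AddSubgroup.dense_or_cyclic S with h | ⟨g, hg⟩
    · exact h
    · exfalso
      have h1 : (1 : ℝ) ∈ S := AddSubgroup.subset_closure (by simp)
      have hθm : θ ∈ S := AddSubgroup.subset_closure (by simp)
      rw [hg] at h1 hθm
      obtain ⟨n, hn⟩ := AddSubgroup.mem_closure_singleton.1 h1
      obtain ⟨m, hm⟩ := AddSubgroup.mem_closure_singleton.1 hθm
      have hn0 : (n : ℝ) ≠ 0 := by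
        intro h; rw [zsmul_eq_mul, h] at hn; norm_num at hn
      have hn0' : n ≠ 0 := fun h => hn0 (by simp [h])
      apply hθ
      refine ⟨(m : ℚ) / (n : ℚ), ?_⟩
      rw [zsmul_eq_mul] at hn hm
      have hg1 : g = 1 / n := by field_simp at hn ⊢; linarith [hn]
      rw [← hm, hg1]
      push_cast
      field_simp
  have := hdense.exists_dist_lt x hρ
  obtain ⟨y, hyS, hyd⟩ := this
  obtain ⟨a, b, rfl⟩ := hmem y hyS
  exact ⟨a, b, by rw [Real.dist_eq] at hyd; rw [abs_sub_comm] at hyd; exact hyd⟩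

lemma lincomb_expand (a : Fin 4 → ℤ) :
    lincomb a = (a 0 : ℂ) + (a 1 : ℂ) * zeta5 + (a 2 : ℂ) * zeta5^2 + (a 3 : ℂ) * zeta5^3 := by
  simp [lincomb, Fin.sum_univ_four, show ((3:Fin 4):ℕ) = 3 from rfl]

lemma s1_expand (a : Fin 4 → ℤ) :
    s1 a = (a 0 : ℂ) + (a 1 : ℂ) * zeta5^2 + (a 2 : ℂ) * zeta5^4 + (a 3 : ℂ) * zeta5^6 := by
  simp [s1, Fin.sum_univ_four, show ((3:Fin 4):ℕ) = 3 from rfl]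

def nv (a b : ℤ) (m : Fin 4 → ℤ) : Fin 4 → ℤ :=
  ![5*(a*m 0 + b*(m 1 - m 3)), 5*(a*m 1 + b*(m 1 + m 2 - m 3)),
    5*(a*m 2 + b*(m 1 + m 2 - m 0)), 5*(a*m 3 + b*(m 2 - m 0))]

lemma identA (a b : ℤ) (m : Fin 4 → ℤ) :
    lincomb ![5*a, 0, -5*b, -5*b] * lincomb m = lincomb (nv a b m) := by
  rw [lincomb_expand, lincomb_expand, lincomb_expand]
  simp only [nv, Matrix.cons_val_zero, Matrix.cons_val_one, Matrix.head_cons,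
    Matrix.cons_val_two, Matrix.tail_cons, Matrix.cons_val_three]
  push_cast
  linear_combination (5*(b:ℂ)*((m 3 : ℂ) - (m 1 : ℂ)) - 5*(b:ℂ)*(m 2 : ℂ)*zeta5
    - 5*(b:ℂ)*(m 3 : ℂ)*zeta5^2) * zsum

lemma identC (a b : ℤ) (m : Fin 4 → ℤ) :
    s1 (nv a b m) = (5*((a:ℂ)+(b:ℂ)) + 5*(b:ℂ)*(zeta5^2+zeta5^3)) * s1 m := by
  rw [s1_expand, s1_expand]
  simp only [nv, Matrix.cons_val_zero, Matrix.cons_val_one, Matrix.head_cons,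
    Matrix.cons_val_two, Matrix.tail_cons, Matrix.cons_val_three]
  push_cast
  linear_combination (5*(b:ℂ)*((m 1:ℂ) - (m 0:ℂ) - (m 3:ℂ))
    + 5*(b:ℂ)*((m 0:ℂ) - (m 1:ℂ) + (m 3:ℂ))*zeta5
    + 5*(b:ℂ)*((m 2:ℂ) - (m 0:ℂ) - (m 3:ℂ))*zeta5^2
    + 5*(b:ℂ)*((m 3:ℂ) - (m 2:ℂ))*zeta5^3
    - 5*(b:ℂ)*(m 3:ℂ)*zeta5^5) * zsum

def kv (a b c d : ℤ) : Fin 4 → ℤ := ![a + d, c + d, d - b, -b]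

lemma identE (a b c d : ℤ) :
    s1 (kv a b c d) = ((a:ℂ) + (b:ℂ)*(1+zeta5^2+zeta5^3))
      + ((c:ℂ) + (d:ℂ)*(1+zeta5^2+zeta5^3)) * zeta5^2 := by
  rw [s1_expand]
  simp only [kv, Matrix.cons_val_zero, Matrix.cons_val_one, Matrix.head_cons,
    Matrix.cons_val_two, Matrix.tail_cons, Matrix.cons_val_three]
  push_cast
  linear_combination (((d:ℂ) - (b:ℂ)) + ((b:ℂ) - (d:ℂ))*zeta5 - (b:ℂ)*zeta5^2) * zsum


lemma zeta1_eq : zeta5 = Complex.exp (((2 * Real.pi / 5 : ℝ)) * Complex.I) := by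
  rw [zeta5]; congr 1; push_cast; ring

lemma zeta1_re : zeta5.re = Real.cos (2 * Real.pi / 5) := by
  rw [zeta1_eq, Complex.exp_ofReal_mul_I_re]

lemma zeta1_im : zeta5.im = Real.sin (2 * Real.pi / 5) := by
  rw [zeta1_eq, Complex.exp_ofReal_mul_I_im]

lemma zeta2_re' : (zeta5 ^ 2).re = Real.cos (2 * (2 * Real.pi / 5)) := by
  rw [zeta2_re]; ring_nf

lemma zeta2_im' : (zeta5 ^ 2).im = Real.sin (2 * (2 * Real.pi / 5)) := by
  rw [zeta2_im]; ring_nf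

-- the 2x2 determinant for (ζ-1, ζ²-1)
lemma det_pos : 0 < (zeta5 - 1).re * (zeta5 ^ 2 - 1).im - (zeta5 - 1).im * (zeta5 ^ 2 - 1).re := by
  set α := 2 * Real.pi / 5 with hα
  have h1re : (zeta5 - 1).re = Real.cos α - 1 := by simp [Complex.sub_re, zeta1_re, hα]
  have h1im : (zeta5 - 1).im = Real.sin α := by simp [Complex.sub_im, zeta1_im, hα]
  have h2re : (zeta5 ^ 2 - 1).re = Real.cos (2*α) - 1 := by simp [Complex.sub_re, zeta2_re', hα]
  have h2im : (zeta5 ^ 2 - 1).im = Real.sin (2*α) := by simp [Complex.sub_im, zeta2_im', hα]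
  rw [h1re, h1im, h2re, h2im, Real.sin_two_mul, Real.cos_two_mul]
  have hsin : 0 < Real.sin α := by
    apply Real.sin_pos_of_pos_of_lt_pi <;> [positivity; nlinarith [Real.pi_pos]]
  have hcos : Real.cos α < 1 := by
    have := Real.cos_lt_cos_of_nonneg_of_le_pi (x := 0) (y := α) le_rfl
      (by rw [hα]; nlinarith [Real.pi_pos]) (by rw [hα]; positivity)
    simpa using this
  nlinarith [hsin, hcos]

lemma span_two {x : ℂ} : ∃ s t : ℝ, x = s • (zeta5 - 1) + t • (zeta5 ^ 2 - 1) := by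
  set A := zeta5 - 1
  set B := zeta5 ^ 2 - 1
  set d := A.re * B.im - A.im * B.re with hd
  have hd0 : d ≠ 0 := ne_of_gt det_pos
  refine ⟨(x.re * B.im - x.im * B.re) / d, (A.re * x.im - A.im * x.re) / d, ?_⟩
  apply Complex.ext
  · simp only [Complex.add_re, Complex.real_smul, Complex.mul_re, Complex.ofReal_re,
      Complex.ofReal_im]
    field_simp
    ring
  · simp only [Complex.add_im, Complex.real_smul, Complex.mul_im, Complex.ofReal_re,
      Complex.ofReal_im]
    field_simp
    ring

lemma roots5 (k : ℕ) : (zeta5 ^ k) ∈ {z : ℂ | z ^ 5 = 1} := by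
  simp only [Set.mem_setOf_eq]
  rw [← pow_mul, mul_comm, pow_mul, z5, one_pow]

lemma affineSpan_roots : affineSpan ℝ {z : ℂ | z ^ 5 = 1} = ⊤ := by
  rw [eq_top_iff]
  intro x _
  have h1 : (1 : ℂ) ∈ affineSpan ℝ {z : ℂ | z ^ 5 = 1} :=
    subset_affineSpan ℝ _ (by simpa using roots5 0)
  have hz : zeta5 ∈ affineSpan ℝ {z : ℂ | z ^ 5 = 1} :=
    subset_affineSpan ℝ _ (by simpa using roots5 1)
  have hz2 : zeta5 ^ 2 ∈ affineSpan ℝ {z : ℂ | z ^ 5 = 1} :=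
    subset_affineSpan ℝ _ (roots5 2)
  have hA : zeta5 - 1 ∈ (affineSpan ℝ {z : ℂ | z ^ 5 = 1}).direction :=
    AffineSubspace.vsub_mem_direction hz h1
  have hB : zeta5 ^ 2 - 1 ∈ (affineSpan ℝ {z : ℂ | z ^ 5 = 1}).direction :=
    AffineSubspace.vsub_mem_direction hz2 h1
  obtain ⟨s, t, hst⟩ := span_two (x := x - 1)
  have hdir : x - 1 ∈ (affineSpan ℝ {z : ℂ | z ^ 5 = 1}).direction := by
    rw [hst]
    exact Submodule.add_mem _ (Submodule.smul_mem _ s hA) (Submodule.smul_mem _ t hB)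
  have := AffineSubspace.vadd_mem_of_mem_direction hdir h1
  simpa using this

lemma pent_interior_nonempty : (interior pent).Nonempty := by
  rw [pent, interior_convexHull_nonempty_iff_affineSpan_eq_top]
  exact affineSpan_roots

-- coordinates in basis (1, ζ²)
lemma coords (w : ℂ) : ∃ X Y : ℝ, w = (X:ℂ) + (Y:ℂ) * zeta5^2 := by
  refine ⟨w.re - (w.im / (zeta5^2).im) * (zeta5^2).re, w.im / (zeta5^2).im, ?_⟩
  have h0 : (zeta5^2).im ≠ 0 := ne_of_gt zeta2_im_pos
  apply Complex.ext
  · simp only [Complex.add_re, Complex.ofReal_re, Complex.mul_re, Complex.ofReal_im]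
    field_simp
    ring
  · simp only [Complex.add_im, Complex.ofReal_im, Complex.mul_im, Complex.ofReal_re]
    field_simp
    ring

lemma thetaC : ((1 - tauR : ℝ) : ℂ) = 1 + zeta5^2 + zeta5^3 := by
  have h := zeta23_re
  push_cast at h ⊢
  linear_combination -h

lemma abs_zeta2 : ‖zeta5^2‖ = 1 := by
  rw [norm_pow, abs_zeta5, one_pow]

/-- dense star points with χ = 1 -/
lemma star_dense (q : ℂ) (ε : ℝ) (hε : 0 < ε) :
    ∃ v : Fin 4 → ℤ, ‖s1 v - q‖ < ε ∧
      (∑ j : Fin 4, ((v j : ℤ) : ZMod 5)) = 1 := by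
  obtain ⟨X, Y, hXY⟩ := coords (q - 1)
  obtain ⟨a, b, hab⟩ := dense_int_combo irrational_theta (X/5) (ε/10) (by positivity)
  obtain ⟨c, d, hcd⟩ := dense_int_combo irrational_theta (Y/5) (ε/10) (by positivity)
  refine ⟨![1 + 5*(a+d), 5*(c+d), 5*(d-b), 5*(-b)], ?_, ?_⟩
  · have hv : s1 ![1 + 5*(a+d), 5*(c+d), 5*(d-b), 5*(-b)] = 1 + 5 * s1 (kv a b c d) := by
      rw [s1_expand, s1_expand]
      simp only [kv, Matrix.cons_val_zero, Matrix.cons_val_one, Matrix.head_cons,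
        Matrix.cons_val_two, Matrix.tail_cons, Matrix.cons_val_three]
      push_cast
      ring
    rw [hv, identE, ← thetaC]
    have hq : q = 1 + (X:ℂ) + (Y:ℂ) * zeta5^2 := by linear_combination hXY
    rw [hq]
    have key : (1 + 5*(((a:ℂ) + (b:ℂ)*((1 - tauR : ℝ):ℂ)) + ((c:ℂ) + (d:ℂ)*((1 - tauR : ℝ):ℂ)) * zeta5^2))
        - (1 + (X:ℂ) + (Y:ℂ)*zeta5^2)
        = ((5*((a:ℝ) + b*(1 - tauR)) - X : ℝ) : ℂ) + ((5*((c:ℝ) + d*(1 - tauR)) - Y : ℝ):ℂ) * zeta5^2 := by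
      push_cast
      ring
    rw [key]
    calc ‖_‖ ≤ ‖(((5*((a:ℝ) + b*(1 - tauR)) - X : ℝ) : ℂ))‖
          + ‖(((5*((c:ℝ) + d*(1 - tauR)) - Y : ℝ):ℂ) * zeta5^2)‖ := norm_add_le _ _
      _ < ε := by
          rw [norm_mul, abs_zeta2, mul_one, Complex.norm_real, Complex.norm_real, Real.norm_eq_abs, Real.norm_eq_abs]
          have e1 : |5*((a:ℝ) + b*(1 - tauR)) - X| < ε/2 := by
            have : 5*((a:ℝ) + b*(1 - tauR)) - X = 5 * (((a:ℝ) + b*(1 - tauR)) - X/5) := by ring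
            rw [this, abs_mul]
            rw [abs_of_nonneg (by norm_num : (0:ℝ) ≤ 5)]
            nlinarith [hab]
          have e2 : |5*((c:ℝ) + d*(1 - tauR)) - Y| < ε/2 := by
            have : 5*((c:ℝ) + d*(1 - tauR)) - Y = 5 * (((c:ℝ) + d*(1 - tauR)) - Y/5) := by ring
            rw [this, abs_mul]
            rw [abs_of_nonneg (by norm_num : (0:ℝ) ≤ 5)]
            nlinarith [hcd]
          linarith
  · rw [Fin.sum_univ_four]
    simp only [Matrix.cons_val_zero, Matrix.cons_val_one, Matrix.head_cons,
      Matrix.cons_val_two, Matrix.tail_cons, Matrix.cons_val_three]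
    push_cast
    have h5 : ∀ x : ZMod 5, 5 * x = 0 := by
      intro x
      have : (5 : ZMod 5) = 0 := by decide
      rw [this, zero_mul]
    rw [h5, h5, h5, h5]
    ring

/-- small nonzero real multiple of z inside ℤ[ζ₅] with small star image and χ = 0 -/
lemma small_multiple (m : Fin 4 → ℤ) (ε : ℝ) (hε : 0 < ε) :
    ∃ (n : Fin 4 → ℤ) (c : ℝ), c ≠ 0 ∧
      lincomb n = (c:ℂ) * lincomb m ∧
      ‖s1 n‖ < ε ∧
      (∑ j : Fin 4, ((n j : ℤ) : ZMod 5)) = 0 := by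
  set M := ‖s1 m‖ with hM
  have hM0 : 0 ≤ M := norm_nonneg _
  set δ := ε / (20 * (M + 1)) with hδ
  have hδ0 : 0 < δ := by rw [hδ]; positivity
  obtain ⟨a, b, hab⟩ := dense_int_combo irrational_theta δ δ hδ0
  have habs : 0 < (a:ℝ) + b * (1 - tauR) ∧ (a:ℝ) + b * (1 - tauR) < 2 * δ := by
    rw [abs_lt] at hab
    constructor <;> linarith [hab.1, hab.2]
  refine ⟨nv a b m, 5*a + 5*b*tauR, ?_, ?_, ?_, ?_⟩
  · -- c ≠ 0
    intro hc
    by_cases hb : b = 0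
    · rw [hb] at hc
      push_cast at hc
      have ha : (a:ℝ) = 0 := by linarith
      have : (a:ℝ) + b * (1 - tauR) = 0 := by rw [hb]; push_cast; linarith
      linarith [habs.1]
    · apply irrational_tauR
      refine ⟨-(a:ℚ)/(b:ℚ), ?_⟩
      have hbR : (b:ℝ) ≠ 0 := Int.cast_ne_zero.2 hb
      push_cast
      field_simp
      linarith [hc]
  · -- lincomb n = c * lincomb m
    rw [← identA]
    congr 1
    rw [lincomb_expand]
    simp only [Matrix.cons_val_zero, Matrix.cons_val_one, Matrix.head_cons,
      Matrix.cons_val_two, Matrix.tail_cons, Matrix.cons_val_three]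
    have h23 := zeta23_re
    push_cast
    push_cast at h23
    linear_combination -5*(b:ℂ)*h23
  · -- abs small
    rw [identC]
    have hfac : (5*((a:ℂ)+(b:ℂ)) + 5*(b:ℂ)*(zeta5^2+zeta5^3))
        = ((5*((a:ℝ) + b*(1 - tauR)) : ℝ) : ℂ) := by
      have h23 := zeta23_re
      push_cast
      push_cast at h23
      linear_combination 5*(b:ℂ)*h23
    rw [hfac, norm_mul, Complex.norm_real, Real.norm_eq_abs, ← hM]
    have h1 : |5*((a:ℝ) + b*(1 - tauR))| < 10 * δ := by
      rw [abs_of_pos (by linarith [habs.1] : (0:ℝ) < 5*((a:ℝ) + b*(1 - tauR)))]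
      linarith [habs.2]
    have h1p : (0:ℝ) < M + 1 := by linarith
    have heq : 10 * δ * (M+1) = ε / 2 := by
      rw [hδ]
      field_simp
      ring
    nlinarith [hM0, h1, hδ0, heq]
  · -- χ = 0
    rw [Fin.sum_univ_four]
    simp only [nv, Matrix.cons_val_zero, Matrix.cons_val_one, Matrix.head_cons,
      Matrix.cons_val_two, Matrix.tail_cons, Matrix.cons_val_three]
    push_cast
    have h5 : ∀ x : ZMod 5, 5 * x = 0 := by
      intro x
      have : (5 : ZMod 5) = 0 := by decide
      rw [this, zero_mul]
    rw [h5, h5, h5, h5]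
    ring

/-- The Penrose window W_P ⊂ ℝ² × ℤ/5ℤ. -/
def WP : Set (ℂ × ZMod 5) :=
  (pent ×ˢ ({1} : Set (ZMod 5))) ∪ ((-pent) ×ˢ ({2} : Set (ZMod 5))) ∪
    ((tauR • pent) ×ˢ ({3} : Set (ZMod 5))) ∪ ((-(tauR • pent)) ×ˢ ({4} : Set (ZMod 5)))

/-- The shifted window W_P^u = (u, 0) + W_P. -/
def WPu (u : ℂ) : Set (ℂ × ZMod 5) := (fun p => ((u, (0 : ZMod 5)) + p)) '' WP

/-- The model set Λ_P^u = {z ∈ ℤ[ζ₅] : z⋆ ∈ W_P^u}. -/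
def LambdaPu (u : ℂ) : Set ℂ := {z | z ∈ Zzeta5 ∧ starMap z ∈ WPu u}

/-- Λ_P^u is generic if the boundary of W_P^u contains no point of ℤ[ζ₅]⋆. -/
def IsGeneric (u : ℂ) : Prop := ∀ z ∈ Zzeta5, starMap z ∉ frontier (WPu u)

/-- A Penrose model set: a translate t + Λ_P^u of a generic Λ_P^u. -/
def IsPMS (Λ : Set ℂ) : Prop := ∃ t u : ℂ, IsGeneric u ∧ Λ = (fun z => t + z) '' LambdaPu u

/-- v is parallel to u. -/
def Par (u v : ℂ) : Prop := ∃ r : ℝ, r ≠ 0 ∧ v = r • u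

/-- A ℤ[ζ₅]-direction: a direction parallel to a nonzero element of ℤ[ζ₅]. -/
def IsZ5Direction (u : ℂ) : Prop := ∃ z ∈ Zzeta5, z ≠ 0 ∧ Par u z

/-- The line through p in direction u. -/
def line (u p : ℂ) : Set ℂ := {x | ∃ t : ℝ, x = p + t • u}

/-- The X-ray of F in direction u, as a function of the base point of the line. -/
def Xray (u : ℂ) (F : Set ℂ) : ℂ → ℕ := fun p => (F ∩ line u p).ncard

/-- A convex subset C of Λ: a finite subset with C = conv(C) ∩ Λ. -/
def IsConvexSubset (Λ C : Set ℂ) : Prop :=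
  C.Finite ∧ C ⊆ Λ ∧ C = convexHull ℝ C ∩ Λ

lemma mem_WPu {u : ℂ} {p : ℂ × ZMod 5} (h1 : p.1 - u ∈ pent) (h2 : p.2 = 1) : p ∈ WPu u := by
  refine ⟨(p.1 - u, 1), ?_, ?_⟩
  · refine Set.mem_union_left _ (Set.mem_union_left _ (Set.mem_union_left _ ?_))
    exact Set.mk_mem_prod h1 rfl
  · exact Prod.ext (by simp) (by simp [h2.symm])

theorem pms_directions (Λ : Set ℂ) (hΛ : IsPMS Λ) (u : ℂ) (hu : ‖u‖ = 1) :
    (∃ lam ∈ Λ, ∃ lam' ∈ Λ, lam - lam' ≠ 0 ∧ Par u (lam - lam')) ↔ IsZ5Direction u := by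
  obtain ⟨t, u₀, hgen, hΛeq⟩ := hΛ
  have hu0 : u ≠ 0 := by
    intro h; rw [h] at hu; simp at hu
  constructor
  · rintro ⟨lam, hlam, lam', hlam', hne, hpar⟩
    rw [hΛeq] at hlam hlam'
    obtain ⟨x, hx, rfl⟩ := hlam
    obtain ⟨y, hy, rfl⟩ := hlam'
    have hmem : (t + x) - (t + y) ∈ Zzeta5 := by
      have e : (t + x) - (t + y) = x - y := by ring
      rw [e]
      exact Zzeta5_sub hx.1 hy.1
    exact ⟨(t + x) - (t + y), hmem, hne, hpar⟩
  · rintro ⟨z, hzZ, hz0, r, hr0, hzu⟩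
    obtain ⟨q, hq⟩ := pent_interior_nonempty
    obtain ⟨ε, hε0, hball⟩ := Metric.isOpen_iff.1 isOpen_interior q hq
    obtain ⟨v, hv, hχv⟩ := star_dense (u₀ + q) (ε/2) (by positivity)
    obtain ⟨n, c, hc0, hlc, hsn, hχn⟩ := small_multiple (coeffs z) (ε/2) (by positivity)
    set w : ℂ := lincomb n with hwdef
    have hzlc : z = lincomb (coeffs z) := coeffs_spec hzZ
    have hw : w = (c:ℂ) * z := by rw [hlc, ← hzlc]
    -- first point
    have hst1 : starMap (lincomb v) ∈ WPu u₀ := by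
      apply mem_WPu
      · rw [starMap_lincomb]
        apply interior_subset
        apply hball
        rw [Metric.mem_ball, Complex.dist_eq]
        have e : s1 v - u₀ - q = s1 v - (u₀ + q) := by ring
        rw [e]
        linarith [hv]
      · rw [starMap_lincomb]
        exact hχv
    -- second point
    have hlin2 : lincomb v + w = lincomb (v + n) := (lincomb_add v n).symm
    have hst2 : starMap (lincomb v + w) ∈ WPu u₀ := by
      rw [hlin2]
      apply mem_WPu
      · rw [starMap_lincomb]
        apply interior_subset
        apply hball
        rw [Metric.mem_ball, Complex.dist_eq, s1_add]
        have e : s1 v + s1 n - u₀ - q = (s1 v - (u₀ + q)) + s1 n := by ring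
        rw [e]
        calc ‖(s1 v - (u₀ + q)) + s1 n‖
            ≤ ‖s1 v - (u₀ + q)‖ + ‖s1 n‖ := norm_add_le _ _
          _ < ε := by linarith [hv, hsn]
      · rw [starMap_lincomb]
        have : ∑ j : Fin 4, (((v + n) j : ℤ) : ZMod 5)
            = (∑ j : Fin 4, ((v j : ℤ) : ZMod 5)) + ∑ j : Fin 4, ((n j : ℤ) : ZMod 5) := by
          rw [← Finset.sum_add_distrib]
          congr 1
          funext j
          simp only [Pi.add_apply]
          push_cast
          ring
        rw [this, hχv, hχn, add_zero]
    have hΛ1 : t + lincomb v ∈ Λ := by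
      rw [hΛeq]
      exact ⟨lincomb v, ⟨lincomb_mem v, hst1⟩, rfl⟩
    have hΛ2 : t + (lincomb v + w) ∈ Λ := by
      rw [hΛeq]
      refine ⟨lincomb v + w, ⟨?_, hst2⟩, rfl⟩
      rw [hlin2]
      exact lincomb_mem _
    have hdiff : t + (lincomb v + w) - (t + lincomb v) = w := by ring
    refine ⟨t + (lincomb v + w), hΛ2, t + lincomb v, hΛ1, ?_, ?_⟩
    · rw [hdiff, hw]
      exact mul_ne_zero (Complex.ofReal_ne_zero.2 hc0) hz0
    · rw [hdiff, hw, hzu]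
      refine ⟨c * r, mul_ne_zero hc0 hr0, ?_⟩
      rw [Complex.real_smul, Complex.real_smul]
      push_cast
      ring

end
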